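/- Let V₁, V₂, W₁, W₂ : ℝ → ℝ be four times continuously differentiable with V_i′(0) = W_i′(0) = 0, and set v_{i,1} := V_i″(0), w_{i,1} := W_i″(0). For a sequence u : ℤ → ℝ², u(j) = (u₁(j), u₂(j)), define the nonlinear part of the lattice force by M(u)(j)₁ := V₁′(u₂(j+1) − u₁(j)) − V₁′(u₁(j) − u₂(j)) − W₁′(u₁(j)) − [v_{1,1}(u₂(j+1) − 2u₁(j) + u₂(j)) − w_{1,1}u₁(j)] and M(u)(j)₂ := V₂′(u₁(j) − u₂(j)) − V₂′(u₂(j) − u₁(j−1)) − W₂′(u₂(j)) − [v_{2,1}(u₁(j) − 2u₂(j) + u₁(j−1)) − w_{2,1}u₂(j)]. Then for every c₀ > 0 there exists a constant c_M > 0 (depending only on V_i, W_i and c₀) such that for all square-summable u, ũ : ℤ → ℝ² with sup_{j,i} |u_i(j)| ≤ c₀ and sup_{j,i} |ũ_i(j)| ≤ c₀, one has ( Σ_{j∈ℤ} |M(u)(j) − M(ũ)(j)|² )^{1/2} ≤ c_M (‖u‖_{ℓ^∞} + ‖ũ‖_{ℓ^∞}) ( Σ_{j∈ℤ} |u(j)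 − ũ(j)|² )^{1/2}, where ‖u‖_{ℓ^∞} := sup_{j∈ℤ, i=1,2} |u_i(j)| and |·| denotes the Euclidean norm on ℝ². -/

import Mathlib

/-- The nonlinear part of the lattice force of the diatomic chain. -/
noncomputable def latticeNonlin (V1 V2 W1 W2 : ℝ → ℝ) (u : ℤ → Fin 2 → ℝ) (j : ℤ) :
    Fin 2 → ℝ :=
  ![deriv V1 (u (j + 1) 1 - u j 0) - deriv V1 (u j 0 - u j 1) - deriv W1 (u j 0) -
      (iteratedDeriv 2 V1 0 * (u (j + 1) 1 - 2 * u j 0 + u j 1) -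
        iteratedDeriv 2 W1 0 * u j 0),
    deriv V2 (u j 0 - u j 1) - deriv V2 (u j 1 - u (j - 1) 0) - deriv W2 (u j 1) -
      (iteratedDeriv 2 V2 0 * (u j 0 - 2 * u j 1 + u (j - 1) 0) -
        iteratedDeriv 2 W2 0 * u j 1)]

open Set in
private lemma keyLip (V : ℝ → ℝ) (hV : ContDiff ℝ 4 V) (R : ℝ) :
    ∃ L ≥ (0:ℝ), ∀ x y : ℝ, |x| ≤ R → |y| ≤ R →
      |(deriv V x - iteratedDeriv 2 V 0 * x) - (deriv V y - iteratedDeriv 2 V 0 * y)| ≤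
        L * max |x| |y| * |x - y| := by
  have h3 : ContDiff ℝ 3 (deriv V) := by
    have h := contDiff_succ_iff_deriv (n := 3) (f := V) (𝕜 := ℝ)
    rw [show (3:WithTop ℕ∞)+1 = 4 from by norm_num] at h
    exact (h.mp hV).2.2
  have h2 : ContDiff ℝ 2 (deriv (deriv V)) := by
    have h := contDiff_succ_iff_deriv (n := 2) (f := deriv V) (𝕜 := ℝ)
    rw [show (2:WithTop ℕ∞)+1 = 3 from by norm_num] at h
    exact (h.mp h3).2.2
  have hd2 : Differentiable ℝ (deriv (deriv V)) := h2.differentiable (by norm_num)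
  have hd1 : Differentiable ℝ (deriv V) := h3.differentiable (by norm_num)
  have hcont3 : Continuous (deriv (deriv (deriv V))) := h2.continuous_deriv (by norm_num)
  obtain ⟨K, hK⟩ := (isCompact_Icc (a := -R) (b := R)).exists_bound_of_continuousOn
    hcont3.continuousOn
  refine ⟨max K 0, le_max_right _ _, ?_⟩
  set L := max K 0 with hLdef
  have hL0 : (0:ℝ) ≤ L := le_max_right _ _
  have hA : ∀ t ∈ Icc (-R) R, |deriv (deriv V) t - deriv (deriv V) 0| ≤ L * |t| := by
    intro t ht
    have hR0 : (0:ℝ) ≤ R := by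
      rcases ht with ⟨h1, h2⟩; linarith
    have h0mem : (0:ℝ) ∈ Icc (-R) R := by constructor <;> linarith
    have := Convex.norm_image_sub_le_of_norm_hasDerivWithin_le
      (f := deriv (deriv V)) (f' := deriv (deriv (deriv V))) (s := Icc (-R) R) (C := L)
      (fun x hx => ((hd2 x).hasDerivAt).hasDerivWithinAt)
      (fun x hx => le_trans (hK x hx) (le_max_left _ _)) (convex_Icc _ _) h0mem ht
    simpa [Real.norm_eq_abs] using this
  intro x y hx hy
  set m := max |x| |y| with hm
  have hm0 : (0:ℝ) ≤ m := le_trans (abs_nonneg _) (le_max_left _ _)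
  have hxm : x ∈ Icc (-m) m := abs_le.mp (le_max_left _ _)
  have hym : y ∈ Icc (-m) m := abs_le.mp (le_max_right _ _)
  have hmR : m ≤ R := max_le hx hy
  have hder : ∀ t : ℝ, HasDerivAt (fun s => deriv V s - deriv (deriv V) 0 * s)
      (deriv (deriv V) t - deriv (deriv V) 0) t := by
    intro t
    have h1 : HasDerivAt (deriv V) (deriv (deriv V) t) t := (hd1 t).hasDerivAt
    have h2' : HasDerivAt (fun s : ℝ => deriv (deriv V) 0 * s) (deriv (deriv V) 0) t := by
      simpa using (hasDerivAt_id t).const_mul (deriv (deriv V) 0)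
    exact h1.sub h2'
  have key := Convex.norm_image_sub_le_of_norm_hasDerivWithin_le
      (f := fun s => deriv V s - deriv (deriv V) 0 * s)
      (f' := fun t => deriv (deriv V) t - deriv (deriv V) 0) (s := Icc (-m) m) (C := L * m)
      (fun t ht => (hder t).hasDerivWithinAt)
      (fun t ht => by
        have htR : t ∈ Icc (-R) R := ⟨by linarith [ht.1], by linarith [ht.2]⟩
        have h1 := hA t htR
        have h2 : |t| ≤ m := abs_le.mpr ⟨ht.1, ht.2⟩
        calc ‖deriv (deriv V) t - deriv (deriv V) 0‖ ≤ L * |t| := by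
              simpa [Real.norm_eq_abs] using h1
          _ ≤ L * m := by nlinarith)
      (convex_Icc _ _) hym hxm
  have hiter : iteratedDeriv 2 V = deriv (deriv V) := by
    rw [iteratedDeriv_succ, iteratedDeriv_one]
  rw [hiter]
  simpa [Real.norm_eq_abs] using key

private lemma tri3 (a b c : ℝ) : |a - b - c| ≤ |a| + |b| + |c| :=
  le_trans (abs_sub _ _) (add_le_add (abs_sub a b) le_rfl)

private lemma abs_sub_sub (a b a' b' : ℝ) : |(a - b) - (a' - b')| ≤ |a - a'| + |b - b'| := by
  have h : (a - b) - (a' - b') = (a - a') - (b - b') := by ring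
  rw [h]; exact abs_sub _ _

private lemma bound_piece {L C M S' D T X : ℝ} (hX : X ≤ L * M * D) (hLC : L ≤ C)
    (hM : M ≤ S') (hD : D ≤ T) (hMn : 0 ≤ M) (hDn : 0 ≤ D) (hC : 0 ≤ C) (hSn : 0 ≤ S') :
    X ≤ C * S' * T :=
  hX.trans (mul_le_mul (mul_le_mul hLC hM hMn hC) hD hDn (mul_nonneg hC hSn))

private lemma sq6 (a b c d e f : ℝ) :
    (a + b + c + d + e + f) ^ 2 ≤ 6 * (a^2 + b^2 + c^2 + d^2 + e^2 + f^2) := by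
  nlinarith [sq_nonneg (a-b), sq_nonneg (a-c), sq_nonneg (a-d), sq_nonneg (a-e), sq_nonneg (a-f),
    sq_nonneg (b-c), sq_nonneg (b-d), sq_nonneg (b-e), sq_nonneg (b-f),
    sq_nonneg (c-d), sq_nonneg (c-e), sq_nonneg (c-f),
    sq_nonneg (d-e), sq_nonneg (d-f), sq_nonneg (e-f)]

theorem nonlinearity_lipschitz_estimate (V1 V2 W1 W2 : ℝ → ℝ)
    (hV1 : ContDiff ℝ 4 V1) (hV2 : ContDiff ℝ 4 V2)
    (hW1 : ContDiff ℝ 4 W1) (hW2 : ContDiff ℝ 4 W2)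
    (hV1' : deriv V1 0 = 0) (hV2' : deriv V2 0 = 0)
    (hW1' : deriv W1 0 = 0) (hW2' : deriv W2 0 = 0)
    (c0 : ℝ) (hc0 : c0 > 0) :
    ∃ cM > (0 : ℝ), ∀ u v : ℤ → Fin 2 → ℝ,
      Summable (fun j : ℤ => (u j 0) ^ 2 + (u j 1) ^ 2) →
      Summable (fun j : ℤ => (v j 0) ^ 2 + (v j 1) ^ 2) →
      (∀ (j : ℤ) (i : Fin 2), |u j i| ≤ c0) →
      (∀ (j : ℤ) (i : Fin 2), |v j i| ≤ c0) →
      Summable (fun j : ℤ =>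
        (latticeNonlin V1 V2 W1 W2 u j 0 - latticeNonlin V1 V2 W1 W2 v j 0) ^ 2 +
        (latticeNonlin V1 V2 W1 W2 u j 1 - latticeNonlin V1 V2 W1 W2 v j 1) ^ 2) ∧
      Real.sqrt (∑' j : ℤ,
          ((latticeNonlin V1 V2 W1 W2 u j 0 - latticeNonlin V1 V2 W1 W2 v j 0) ^ 2 +
           (latticeNonlin V1 V2 W1 W2 u j 1 - latticeNonlin V1 V2 W1 W2 v j 1) ^ 2)) ≤
        cM * ((⨆ j : ℤ, max |u j 0| |u j 1|) + ⨆ j : ℤ, max |v j 0| |v j 1|) *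
          Real.sqrt (∑' j : ℤ, ((u j 0 - v j 0) ^ 2 + (u j 1 - v j 1) ^ 2)) := by
  obtain ⟨L1, hL1n, hL1⟩ := keyLip V1 hV1 (2*c0)
  obtain ⟨L2, hL2n, hL2⟩ := keyLip V2 hV2 (2*c0)
  obtain ⟨L3, hL3n, hL3⟩ := keyLip W1 hW1 (2*c0)
  obtain ⟨L4, hL4n, hL4⟩ := keyLip W2 hW2 (2*c0)
  set C := L1 + L2 + L3 + L4 + 1 with hCdef
  have hC0 : (0:ℝ) < C := by linarith
  refine ⟨30 * C, by linarith, ?_⟩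
  intro u v hu hv hub hvb
  -- sup bounds
  have hbu : BddAbove (Set.range fun j : ℤ => max |u j 0| |u j 1|) :=
    ⟨c0, by rintro x ⟨j, rfl⟩; exact max_le (hub j 0) (hub j 1)⟩
  have hbv : BddAbove (Set.range fun j : ℤ => max |v j 0| |v j 1|) :=
    ⟨c0, by rintro x ⟨j, rfl⟩; exact max_le (hvb j 0) (hvb j 1)⟩
  set Su := ⨆ j : ℤ, max |u j 0| |u j 1| with hSu
  set Sv := ⨆ j : ℤ, max |v j 0| |v j 1| with hSv
  have hSuB : ∀ (j : ℤ) (i : Fin 2), |u j i| ≤ Su := by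
    intro j i
    have h := le_ciSup hbu j
    rw [← hSu] at h
    fin_cases i
    · exact le_trans (le_max_left _ _) h
    · exact le_trans (le_max_right _ _) h
  have hSvB : ∀ (j : ℤ) (i : Fin 2), |v j i| ≤ Sv := by
    intro j i
    have h := le_ciSup hbv j
    rw [← hSv] at h
    fin_cases i
    · exact le_trans (le_max_left _ _) h
    · exact le_trans (le_max_right _ _) h
  have hSu0 : (0:ℝ) ≤ Su := le_trans (abs_nonneg _) (hSuB 0 0)
  have hSv0 : (0:ℝ) ≤ Sv := le_trans (abs_nonneg _) (hSvB 0 0)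
  set S := Su + Sv with hSdef
  have hS0 : (0:ℝ) ≤ S := by linarith
  -- distances
  set Q := fun j : ℤ => (u j 0 - v j 0) ^ 2 + (u j 1 - v j 1) ^ 2 with hQdef
  have hQnn : ∀ j, 0 ≤ Q j := fun j => by simp only [hQdef]; positivity
  have hQsum : Summable Q := by
    refine Summable.of_nonneg_of_le hQnn (fun j => ?_) ((hu.add hv).mul_left 2)
    simp only [hQdef]
    nlinarith [sq_nonneg (u j 0 + v j 0), sq_nonneg (u j 1 + v j 1)]
  set T := fun j : ℤ => |u (j+1) 0 - v (j+1) 0| + |u (j+1) 1 - v (j+1) 1| +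
      |u j 0 - v j 0| + |u j 1 - v j 1| + |u (j-1) 0 - v (j-1) 0| + |u (j-1) 1 - v (j-1) 1|
    with hTdef
  clear_value C Su Sv S Q T
  -- argument bounds
  have harg : ∀ (w : ℤ → Fin 2 → ℝ), (∀ (j : ℤ) (i : Fin 2), |w j i| ≤ c0) →
      ∀ (a b : ℤ) (i i' : Fin 2), |w a i - w b i'| ≤ 2 * c0 := by
    intro w hw a b i i'
    calc |w a i - w b i'| ≤ |w a i| + |w b i'| := abs_sub _ _
      _ ≤ 2 * c0 := by linarith [hw a i, hw b i']
  have harg1 : ∀ (w : ℤ → Fin 2 → ℝ), (∀ (j : ℤ) (i : Fin 2), |w j i| ≤ c0) →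
      ∀ (a : ℤ) (i : Fin 2), |w a i| ≤ 2 * c0 := by
    intro w hw a i; linarith [hw a i]
  -- expansion of latticeNonlin
  have hM0 : ∀ (w : ℤ → Fin 2 → ℝ) (j : ℤ), latticeNonlin V1 V2 W1 W2 w j 0 =
      (deriv V1 (w (j+1) 1 - w j 0) - iteratedDeriv 2 V1 0 * (w (j+1) 1 - w j 0))
      - (deriv V1 (w j 0 - w j 1) - iteratedDeriv 2 V1 0 * (w j 0 - w j 1))
      - (deriv W1 (w j 0) - iteratedDeriv 2 W1 0 * (w j 0)) := by
    intro w j; simp only [latticeNonlin, Matrix.cons_val_zero]; ring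
  have hM1 : ∀ (w : ℤ → Fin 2 → ℝ) (j : ℤ), latticeNonlin V1 V2 W1 W2 w j 1 =
      (deriv V2 (w j 0 - w j 1) - iteratedDeriv 2 V2 0 * (w j 0 - w j 1))
      - (deriv V2 (w j 1 - w (j-1) 0) - iteratedDeriv 2 V2 0 * (w j 1 - w (j-1) 0))
      - (deriv W2 (w j 1) - iteratedDeriv 2 W2 0 * (w j 1)) := by
    intro w j; simp only [latticeNonlin, Matrix.cons_val_one, Matrix.head_cons, Matrix.cons_val_zero]; ring
  -- pointwise key estimates
  have key0 : ∀ j : ℤ, |latticeNonlin V1 V2 W1 W2 u j 0 - latticeNonlin V1 V2 W1 W2 v j 0| ≤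
      5 * (C * S * T j) := by
    intro j
    have t1 := abs_nonneg (u (j+1) 0 - v (j+1) 0)
    have t2 := abs_nonneg (u (j+1) 1 - v (j+1) 1)
    have t3 := abs_nonneg (u j 0 - v j 0)
    have t4 := abs_nonneg (u j 1 - v j 1)
    have t5 := abs_nonneg (u (j-1) 0 - v (j-1) 0)
    have t6 := abs_nonneg (u (j-1) 1 - v (j-1) 1)
    have e1 : |(deriv V1 (u (j+1) 1 - u j 0) - iteratedDeriv 2 V1 0 * (u (j+1) 1 - u j 0))
        - (deriv V1 (v (j+1) 1 - v j 0) - iteratedDeriv 2 V1 0 * (v (j+1) 1 - v j 0))| ≤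
        2 * (C * S * T j) := by
      refine le_trans ?_ (le_of_eq (by ring : C * (2*S) * T j = 2 * (C * S * T j)))
      refine bound_piece (hL1 _ _ (harg u hub _ _ _ _) (harg v hvb _ _ _ _)) (by linarith)
        (max_le ((abs_sub _ _).trans (by linarith [hSuB (j+1) 1, hSuB j 0]))
                ((abs_sub _ _).trans (by linarith [hSvB (j+1) 1, hSvB j 0])))
        ((abs_sub_sub _ _ _ _).trans (by simp only [hTdef]; linarith))
        (le_trans (abs_nonneg _) (le_max_left _ _)) (abs_nonneg _) hC0.le (by linarith)
    have e2 : |(deriv V1 (u j 0 - u j 1) - iteratedDeriv 2 V1 0 * (u j 0 - u j 1))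
        - (deriv V1 (v j 0 - v j 1) - iteratedDeriv 2 V1 0 * (v j 0 - v j 1))| ≤
        2 * (C * S * T j) := by
      refine le_trans ?_ (le_of_eq (by ring : C * (2*S) * T j = 2 * (C * S * T j)))
      refine bound_piece (hL1 _ _ (harg u hub _ _ _ _) (harg v hvb _ _ _ _)) (by linarith)
        (max_le ((abs_sub _ _).trans (by linarith [hSuB j 0, hSuB j 1]))
                ((abs_sub _ _).trans (by linarith [hSvB j 0, hSvB j 1])))
        ((abs_sub_sub _ _ _ _).trans (by simp only [hTdef]; linarith))
        (le_trans (abs_nonneg _) (le_max_left _ _)) (abs_nonneg _) hC0.le (by linarith)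
    have e3 : |(deriv W1 (u j 0) - iteratedDeriv 2 W1 0 * (u j 0))
        - (deriv W1 (v j 0) - iteratedDeriv 2 W1 0 * (v j 0))| ≤ C * S * T j := by
      refine bound_piece (hL3 _ _ (harg1 u hub _ _) (harg1 v hvb _ _)) (by linarith)
        (max_le (by linarith [hSuB j 0]) (by linarith [hSvB j 0]))
        (by simp only [hTdef]; linarith)
        (le_trans (abs_nonneg _) (le_max_left _ _)) (abs_nonneg _) hC0.le hS0
    rw [hM0 u j, hM0 v j]
    have hre : ((deriv V1 (u (j+1) 1 - u j 0) - iteratedDeriv 2 V1 0 * (u (j+1) 1 - u j 0))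
        - (deriv V1 (u j 0 - u j 1) - iteratedDeriv 2 V1 0 * (u j 0 - u j 1))
        - (deriv W1 (u j 0) - iteratedDeriv 2 W1 0 * (u j 0)))
        - ((deriv V1 (v (j+1) 1 - v j 0) - iteratedDeriv 2 V1 0 * (v (j+1) 1 - v j 0))
        - (deriv V1 (v j 0 - v j 1) - iteratedDeriv 2 V1 0 * (v j 0 - v j 1))
        - (deriv W1 (v j 0) - iteratedDeriv 2 W1 0 * (v j 0)))
        = ((deriv V1 (u (j+1) 1 - u j 0) - iteratedDeriv 2 V1 0 * (u (j+1) 1 - u j 0))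
        - (deriv V1 (v (j+1) 1 - v j 0) - iteratedDeriv 2 V1 0 * (v (j+1) 1 - v j 0)))
        - ((deriv V1 (u j 0 - u j 1) - iteratedDeriv 2 V1 0 * (u j 0 - u j 1))
        - (deriv V1 (v j 0 - v j 1) - iteratedDeriv 2 V1 0 * (v j 0 - v j 1)))
        - ((deriv W1 (u j 0) - iteratedDeriv 2 W1 0 * (u j 0))
        - (deriv W1 (v j 0) - iteratedDeriv 2 W1 0 * (v j 0))) := by ring
    rw [hre]
    refine le_trans (tri3 _ _ _) ?_
    linarith [e1, e2, e3]
  have key1 : ∀ j : ℤ, |latticeNonlin V1 V2 W1 W2 u j 1 - latticeNonlin V1 V2 W1 W2 v j 1| ≤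
      5 * (C * S * T j) := by
    intro j
    have t1 := abs_nonneg (u (j+1) 0 - v (j+1) 0)
    have t2 := abs_nonneg (u (j+1) 1 - v (j+1) 1)
    have t3 := abs_nonneg (u j 0 - v j 0)
    have t4 := abs_nonneg (u j 1 - v j 1)
    have t5 := abs_nonneg (u (j-1) 0 - v (j-1) 0)
    have t6 := abs_nonneg (u (j-1) 1 - v (j-1) 1)
    have e1 : |(deriv V2 (u j 0 - u j 1) - iteratedDeriv 2 V2 0 * (u j 0 - u j 1))
        - (deriv V2 (v j 0 - v j 1) - iteratedDeriv 2 V2 0 * (v j 0 - v j 1))| ≤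
        2 * (C * S * T j) := by
      refine le_trans ?_ (le_of_eq (by ring : C * (2*S) * T j = 2 * (C * S * T j)))
      refine bound_piece (hL2 _ _ (harg u hub _ _ _ _) (harg v hvb _ _ _ _)) (by linarith)
        (max_le ((abs_sub _ _).trans (by linarith [hSuB j 0, hSuB j 1]))
                ((abs_sub _ _).trans (by linarith [hSvB j 0, hSvB j 1])))
        ((abs_sub_sub _ _ _ _).trans (by simp only [hTdef]; linarith))
        (le_trans (abs_nonneg _) (le_max_left _ _)) (abs_nonneg _) hC0.le (by linarith)
    have e2 : |(deriv V2 (u j 1 - u (j-1) 0) - iteratedDeriv 2 V2 0 * (u j 1 - u (j-1) 0))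
        - (deriv V2 (v j 1 - v (j-1) 0) - iteratedDeriv 2 V2 0 * (v j 1 - v (j-1) 0))| ≤
        2 * (C * S * T j) := by
      refine le_trans ?_ (le_of_eq (by ring : C * (2*S) * T j = 2 * (C * S * T j)))
      refine bound_piece (hL2 _ _ (harg u hub _ _ _ _) (harg v hvb _ _ _ _)) (by linarith)
        (max_le ((abs_sub _ _).trans (by linarith [hSuB j 1, hSuB (j-1) 0]))
                ((abs_sub _ _).trans (by linarith [hSvB j 1, hSvB (j-1) 0])))
        ((abs_sub_sub _ _ _ _).trans (by simp only [hTdef]; linarith))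
        (le_trans (abs_nonneg _) (le_max_left _ _)) (abs_nonneg _) hC0.le (by linarith)
    have e3 : |(deriv W2 (u j 1) - iteratedDeriv 2 W2 0 * (u j 1))
        - (deriv W2 (v j 1) - iteratedDeriv 2 W2 0 * (v j 1))| ≤ C * S * T j := by
      refine bound_piece (hL4 _ _ (harg1 u hub _ _) (harg1 v hvb _ _)) (by linarith)
        (max_le (by linarith [hSuB j 1]) (by linarith [hSvB j 1]))
        (by simp only [hTdef]; linarith)
        (le_trans (abs_nonneg _) (le_max_left _ _)) (abs_nonneg _) hC0.le hS0
    rw [hM1 u j, hM1 v j]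
    have hre : ((deriv V2 (u j 0 - u j 1) - iteratedDeriv 2 V2 0 * (u j 0 - u j 1))
        - (deriv V2 (u j 1 - u (j-1) 0) - iteratedDeriv 2 V2 0 * (u j 1 - u (j-1) 0))
        - (deriv W2 (u j 1) - iteratedDeriv 2 W2 0 * (u j 1)))
        - ((deriv V2 (v j 0 - v j 1) - iteratedDeriv 2 V2 0 * (v j 0 - v j 1))
        - (deriv V2 (v j 1 - v (j-1) 0) - iteratedDeriv 2 V2 0 * (v j 1 - v (j-1) 0))
        - (deriv W2 (v j 1) - iteratedDeriv 2 W2 0 * (v j 1)))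
        = ((deriv V2 (u j 0 - u j 1) - iteratedDeriv 2 V2 0 * (u j 0 - u j 1))
        - (deriv V2 (v j 0 - v j 1) - iteratedDeriv 2 V2 0 * (v j 0 - v j 1)))
        - ((deriv V2 (u j 1 - u (j-1) 0) - iteratedDeriv 2 V2 0 * (u j 1 - u (j-1) 0))
        - (deriv V2 (v j 1 - v (j-1) 0) - iteratedDeriv 2 V2 0 * (v j 1 - v (j-1) 0)))
        - ((deriv W2 (u j 1) - iteratedDeriv 2 W2 0 * (u j 1))
        - (deriv W2 (v j 1) - iteratedDeriv 2 W2 0 * (v j 1))) := by ring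
    rw [hre]
    refine le_trans (tri3 _ _ _) ?_
    linarith [e1, e2, e3]
  -- quadratic pointwise bound
  have keysq : ∀ j : ℤ,
      (latticeNonlin V1 V2 W1 W2 u j 0 - latticeNonlin V1 V2 W1 W2 v j 0) ^ 2 +
      (latticeNonlin V1 V2 W1 W2 u j 1 - latticeNonlin V1 V2 W1 W2 v j 1) ^ 2 ≤
      300 * (C * S) ^ 2 * (Q (j+1) + Q j + Q (j-1)) := by
    intro j
    have s0 : (latticeNonlin V1 V2 W1 W2 u j 0 - latticeNonlin V1 V2 W1 W2 v j 0) ^ 2 ≤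
        (5 * (C * S * T j)) ^ 2 := by
      have h := pow_le_pow_left₀ (abs_nonneg _) (key0 j) 2
      simpa [sq_abs] using h
    have s1 : (latticeNonlin V1 V2 W1 W2 u j 1 - latticeNonlin V1 V2 W1 W2 v j 1) ^ 2 ≤
        (5 * (C * S * T j)) ^ 2 := by
      have h := pow_le_pow_left₀ (abs_nonneg _) (key1 j) 2
      simpa [sq_abs] using h
    have h6 := sq6 |u (j+1) 0 - v (j+1) 0| |u (j+1) 1 - v (j+1) 1| |u j 0 - v j 0|
      |u j 1 - v j 1| |u (j-1) 0 - v (j-1) 0| |u (j-1) 1 - v (j-1) 1|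
    simp only [sq_abs] at h6
    have h7 : (C*S)^2 * (T j)^2 ≤ (C*S)^2 * (6 * ((u (j+1) 0 - v (j+1) 0)^2 +
        (u (j+1) 1 - v (j+1) 1)^2 + (u j 0 - v j 0)^2 + (u j 1 - v j 1)^2 +
        (u (j-1) 0 - v (j-1) 0)^2 + (u (j-1) 1 - v (j-1) 1)^2)) := by
      refine mul_le_mul_of_nonneg_left ?_ (sq_nonneg _)
      simp only [hTdef]
      exact h6
    have s0' := s0.trans_eq (by ring : (5 * (C * S * T j)) ^ 2 = 25 * ((C*S)^2 * (T j)^2))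
    have s1' := s1.trans_eq (by ring : (5 * (C * S * T j)) ^ 2 = 25 * ((C*S)^2 * (T j)^2))
    simp only [hQdef]
    linarith [s0', s1', h7]
  -- summability of shifted Q
  have hQ1 : Summable (fun j : ℤ => Q (j + 1)) := by
    have h := (Equiv.summable_iff (Equiv.addRight (1:ℤ)) (f := Q)).mpr hQsum
    simpa [Function.comp_def] using h
  have hQm1 : Summable (fun j : ℤ => Q (j - 1)) := by
    have h := (Equiv.summable_iff (Equiv.subRight (1:ℤ)) (f := Q)).mpr hQsum
    simpa [Function.comp_def, Equiv.subRight_apply] using h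
  have hmajsum : Summable (fun j : ℤ => 300 * (C * S) ^ 2 * (Q (j+1) + Q j + Q (j-1))) :=
    ((hQ1.add hQsum).add hQm1).mul_left _
  have hnn : ∀ j : ℤ, 0 ≤ (latticeNonlin V1 V2 W1 W2 u j 0 - latticeNonlin V1 V2 W1 W2 v j 0) ^ 2 +
      (latticeNonlin V1 V2 W1 W2 u j 1 - latticeNonlin V1 V2 W1 W2 v j 1) ^ 2 :=
    fun j => by positivity
  have hsumLHS : Summable (fun j : ℤ =>
      (latticeNonlin V1 V2 W1 W2 u j 0 - latticeNonlin V1 V2 W1 W2 v j 0) ^ 2 +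
      (latticeNonlin V1 V2 W1 W2 u j 1 - latticeNonlin V1 V2 W1 W2 v j 1) ^ 2) :=
    Summable.of_nonneg_of_le hnn keysq hmajsum
  refine ⟨hsumLHS, ?_⟩
  -- tsum computation
  have ht1 : ∑' j : ℤ, Q (j + 1) = ∑' j : ℤ, Q j := by
    have h := Equiv.tsum_eq (Equiv.addRight (1:ℤ)) Q
    simpa using h
  have htm1 : ∑' j : ℤ, Q (j - 1) = ∑' j : ℤ, Q j := by
    have h := Equiv.tsum_eq (Equiv.subRight (1:ℤ)) Q
    simpa using h
  have hQtsum0 : (0:ℝ) ≤ ∑' j : ℤ, Q j := tsum_nonneg hQnn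
  have hTS : (∑' j : ℤ,
      ((latticeNonlin V1 V2 W1 W2 u j 0 - latticeNonlin V1 V2 W1 W2 v j 0) ^ 2 +
       (latticeNonlin V1 V2 W1 W2 u j 1 - latticeNonlin V1 V2 W1 W2 v j 1) ^ 2)) ≤
      900 * (C * S) ^ 2 * ∑' j : ℤ, Q j := by
    calc (∑' j : ℤ,
        ((latticeNonlin V1 V2 W1 W2 u j 0 - latticeNonlin V1 V2 W1 W2 v j 0) ^ 2 +
         (latticeNonlin V1 V2 W1 W2 u j 1 - latticeNonlin V1 V2 W1 W2 v j 1) ^ 2)) ≤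
        ∑' j : ℤ, 300 * (C * S) ^ 2 * (Q (j+1) + Q j + Q (j-1)) :=
          Summable.tsum_le_tsum keysq hsumLHS hmajsum
      _ = 300 * (C * S) ^ 2 * ∑' j : ℤ, (Q (j+1) + Q j + Q (j-1)) := tsum_mul_left
      _ = 300 * (C * S) ^ 2 *
          ((∑' j : ℤ, Q (j+1)) + (∑' j : ℤ, Q j) + ∑' j : ℤ, Q (j-1)) := by
          rw [Summable.tsum_add (hQ1.add hQsum) hQm1, Summable.tsum_add hQ1 hQsum]
      _ = 900 * (C * S) ^ 2 * ∑' j : ℤ, Q j := by rw [ht1, htm1]; ring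
  calc Real.sqrt (∑' j : ℤ,
      ((latticeNonlin V1 V2 W1 W2 u j 0 - latticeNonlin V1 V2 W1 W2 v j 0) ^ 2 +
       (latticeNonlin V1 V2 W1 W2 u j 1 - latticeNonlin V1 V2 W1 W2 v j 1) ^ 2)) ≤
      Real.sqrt (900 * (C * S) ^ 2 * ∑' j : ℤ, Q j) := Real.sqrt_le_sqrt hTS
    _ = 30 * (C * S) * Real.sqrt (∑' j : ℤ, Q j) := by
        rw [show (900:ℝ) * (C * S) ^ 2 * ∑' j : ℤ, Q j = (30 * (C * S)) ^ 2 * ∑' j : ℤ, Q j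
          from by ring, Real.sqrt_mul (by positivity), Real.sqrt_sq (by positivity)]
    _ = 30 * C * S * Real.sqrt (∑' j : ℤ, Q j) := by ring
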